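/- (Banach–Kuratowski) If there exists a countably additive probability measure defined on all subsets of a set of cardinality 2^ℵ₀ that vanishes on singletons, then the continuum hypothesis fails, i.e., 2^ℵ₀ > ℵ₁. -/

import Mathlib

open Cardinal Set

section helpers

variable {X : Type} {μ : Set X → ℝ}

lemma bk_mu_empty
    (hadd : ∀ E : ℕ → Set X, Pairwise (Function.onFun Disjoint E) →
      HasSum (fun n => μ (E n)) (μ (⋃ n, E n))) : μ ∅ = 0 := by
  have h := hadd (fun _ => ∅) (by intro i j _; simp [Function.onFun])
  simp only [Set.iUnion_empty] at h
  exact tendsto_nhds_unique tendsto_const_nhds h.summable.tendsto_atTop_zero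

lemma bk_mu_pair
    (hadd : ∀ E : ℕ → Set X, Pairwise (Function.onFun Disjoint E) →
      HasSum (fun n => μ (E n)) (μ (⋃ n, E n)))
    {S T : Set X} (hd : Disjoint S T) : μ (S ∪ T) = μ S + μ T := by
  have he : μ ∅ = 0 := bk_mu_empty hadd
  set E : ℕ → Set X := fun n => if n = 0 then S else if n = 1 then T else ∅ with hE
  have hpd : Pairwise (Function.onFun Disjoint E) := by
    intro i j hij
    simp only [Function.onFun, hE]
    split_ifs <;> simp_all (config := {decide := false}) [hd, hd.symm]
  have hu : (⋃ n, E n) = S ∪ T := by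
    apply Set.Subset.antisymm
    · refine Set.iUnion_subset fun n => ?_
      simp only [hE]; split_ifs <;> simp
    · rintro x (hx | hx)
      · exact Set.mem_iUnion.2 ⟨0, by simp [hE, hx]⟩
      · exact Set.mem_iUnion.2 ⟨1, by simp [hE, hx]⟩
  have h := hadd E hpd
  rw [hu] at h
  have h2 : HasSum (fun n => μ (E n)) (μ S + μ T) := by
    have hz : ∀ b ∉ ({0, 1} : Finset ℕ), μ (E b) = 0 := by
      intro b hb
      simp only [Finset.mem_insert, Finset.mem_singleton] at hb
      push_neg at hb
      simp [hE, hb.1, hb.2, he]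
    have := hasSum_sum_of_ne_finset_zero (L := SummationFilter.unconditional ℕ) hz
    rwa [Finset.sum_pair (by norm_num : (0:ℕ) ≠ 1), show E 0 = S by simp [hE],
      show E 1 = T by simp [hE]] at this
  exact h.unique h2

lemma bk_mu_countable
    (hadd : ∀ E : ℕ → Set X, Pairwise (Function.onFun Disjoint E) →
      HasSum (fun n => μ (E n)) (μ (⋃ n, E n)))
    (hsing : ∀ x : X, μ {x} = 0)
    {S : Set X} (hS : S.Countable) : μ S = 0 := by
  classical
  have he : μ ∅ = 0 := bk_mu_empty hadd
  rcases S.eq_empty_or_nonempty with rfl | hne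
  · exact he
  obtain ⟨g, hg⟩ := hS.exists_eq_range hne
  set E : ℕ → Set X := fun n => {x | x = g n ∧ ∀ m < n, g m ≠ g n} with hE
  have hz : ∀ n, μ (E n) = 0 := by
    intro n
    by_cases h : ∀ m < n, g m ≠ g n
    · have : E n = {g n} := by
        ext x
        simp only [hE, Set.mem_setOf_eq, Set.mem_singleton_iff]
        exact ⟨fun h' => h'.1, fun h' => ⟨h', h⟩⟩
      rw [this]; exact hsing _
    · have : E n = ∅ := by ext x; simp only [hE, mem_setOf_eq, mem_empty_iff_false,
        iff_false, not_and]; intro _; exact h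
      rw [this]; exact he
  have hpd : Pairwise (Function.onFun Disjoint E) := by
    intro i j hij
    rcases hij.lt_or_gt with h | h
    · refine Set.disjoint_left.2 fun x ⟨hx1, _⟩ ⟨hx2, hx3⟩ => ?_
      exact hx3 i h (hx1 ▸ hx2.symm ▸ rfl)
    · refine Set.disjoint_left.2 fun x ⟨hx1, hx3⟩ ⟨hx2, _⟩ => ?_
      exact hx3 j h (hx2 ▸ hx1.symm ▸ rfl)
  have hu : (⋃ n, E n) = S := by
    apply Set.Subset.antisymm
    · refine Set.iUnion_subset fun n x hx => ?_
      rw [hg]; exact hx.1 ▸ Set.mem_range_self n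
    · intro x hx
      rw [hg] at hx
      obtain ⟨n, hn⟩ := hx
      have hex : ∃ n, g n = x := ⟨n, hn⟩
      refine Set.mem_iUnion.2 ⟨Nat.find hex, ?_⟩
      refine ⟨(Nat.find_spec hex).symm, fun m hm hmeq => ?_⟩
      exact Nat.find_min hex hm (hmeq.trans (Nat.find_spec hex))
  have h := hadd E hpd
  rw [hu] at h
  have : (fun n => μ (E n)) = fun _ => (0:ℝ) := funext hz
  rw [this] at h
  exact h.unique hasSum_zero

lemma bk_mu_compl
    (huniv : μ Set.univ = 1)
    (hadd : ∀ E : ℕ → Set X, Pairwise (Function.onFun Disjoint E) →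
      HasSum (fun n => μ (E n)) (μ (⋃ n, E n)))
    (S : Set X) : μ Sᶜ = 1 - μ S := by
  have := bk_mu_pair hadd (disjoint_compl_right : Disjoint S Sᶜ)
  rw [Set.union_compl_self, huniv] at this
  linarith

end helpers

/-- **Banach–Kuratowski.** If some set of cardinality `2^ℵ₀` carries a total,
countably additive probability measure vanishing on singletons, then the
continuum hypothesis fails: `ℵ₁ < 2^ℵ₀`. -/
theorem banach_kuratowski (Ω : Type) (hΩ : Cardinal.mk Ω = Cardinal.continuum)
    (μ : Set Ω → ℝ)
    (hnn : ∀ s : Set Ω, 0 ≤ μ s) (hle : ∀ s : Set Ω, μ s ≤ 1)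
    (huniv : μ Set.univ = 1)
    (hadd : ∀ E : ℕ → Set Ω, Pairwise (Function.onFun Disjoint E) →
      HasSum (fun n => μ (E n)) (μ (⋃ n, E n)))
    (hsing : ∀ x : Ω, μ {x} = 0) :
    Cardinal.aleph 1 < Cardinal.continuum := by
  suffices h0 : (Cardinal.aleph 1 : Cardinal.{0}) < Cardinal.continuum.{0} by
    have h1 := Cardinal.lift_lt.2 h0
    rwa [Cardinal.lift_aleph, Ordinal.lift_one, Cardinal.lift_continuum] at h1
  by_contra hcon
  have heq : (Cardinal.continuum : Cardinal.{0}) = Cardinal.aleph 1 :=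
    le_antisymm (not_lt.1 hcon) Cardinal.aleph_one_le_continuum
  set σ := (Cardinal.aleph 1).ord.ToType with hσ
  have hmk : Cardinal.mk σ = Cardinal.aleph 1 := Cardinal.mk_ord_toType _
  obtain ⟨e⟩ : Nonempty (Ω ≃ σ) := Cardinal.eq.1 (by rw [hΩ, hmk]; exact heq)
  set ν : Set σ → ℝ := fun S => μ (⇑e ⁻¹' S) with hν
  -- transferred measure properties
  have hnn' : ∀ s : Set σ, 0 ≤ ν s := fun s => hnn _
  have huniv' : ν Set.univ = 1 := by simp only [hν, Set.preimage_univ]; exact huniv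
  have hadd' : ∀ E : ℕ → Set σ, Pairwise (Function.onFun Disjoint E) →
      HasSum (fun n => ν (E n)) (ν (⋃ n, E n)) := by
    intro E hE
    have h := hadd (fun n => ⇑e ⁻¹' E n) (fun i j hij => (hE hij).preimage _)
    simpa only [hν, Set.preimage_iUnion] using h
  have hsing' : ∀ x : σ, ν {x} = 0 := by
    intro x
    have : ⇑e ⁻¹' ({x} : Set σ) = {e.symm x} := by
      ext y; simp [Equiv.eq_symm_apply, eq_comm]
    simp only [hν, this]; exact hsing _
  have hcnt0 : ∀ s : Set σ, s.Countable → ν s = 0 :=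
    fun s hs => bk_mu_countable hadd' hsing' hs
  -- initial segments are countable
  have hseg : ∀ β : σ, Countable {y : σ // y < β} := by
    intro β
    rw [← Cardinal.mk_le_aleph0_iff, ← Order.lt_succ_iff, Cardinal.succ_aleph0]
    haveI : IsWellOrder σ (· < ·) := isWellOrder_lt
    have h1 := @Ordinal.card_typein _ ((· < ·) : σ → σ → Prop) inferInstance β
    rw [← h1, ← Cardinal.lt_ord]
    exact Ordinal.typein_lt_self β
  -- injections into ℕ
  have hinj : ∀ β : σ, ∃ f : {y : σ // y < β} → ℕ, Function.Injective f :=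
    fun β => (countable_iff_exists_injective _).1 (hseg β)
  choose f hf using hinj
  -- the Ulam matrix
  set A : ℕ → σ → Set σ := fun n α => {β | ∃ h : α < β, f β ⟨α, h⟩ = n} with hA
  -- disjointness across n for fixed α
  have hdisjn : ∀ α : σ, Pairwise (Function.onFun Disjoint fun n => A n α) := by
    intro α n m hnm
    refine Set.disjoint_left.2 fun β ⟨h1, h2⟩ ⟨h3, h4⟩ => ?_
    exact hnm (h2 ▸ h4 ▸ rfl)
  -- disjointness across α for fixed n
  have hdisja : ∀ n : ℕ, ∀ α α' : σ, α ≠ α' → Disjoint (A n α) (A n α') := by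
    intro n α α' hne
    refine Set.disjoint_left.2 fun β ⟨h1, h2⟩ ⟨h3, h4⟩ => ?_
    exact hne (congrArg Subtype.val (hf β (h2.trans h4.symm)))
  -- union over n is the final segment
  have hun : ∀ α : σ, (⋃ n, A n α) = {β | α < β} := by
    intro α
    apply Set.Subset.antisymm
    · exact Set.iUnion_subset fun n β ⟨h, _⟩ => h
    · intro β hβ
      exact Set.mem_iUnion.2 ⟨f β ⟨α, hβ⟩, hβ, rfl⟩
  -- the tail has measure 1
  have htail : ∀ α : σ, ν {β | α < β} = 1 := by
    intro α
    have hcompl : {β : σ | α < β} = {β : σ | β ≤ α}ᶜ := by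
      ext β; simp [not_le]
    have hc : ({β : σ | β ≤ α}).Countable := by
      have : {β : σ | β ≤ α} = insert α {β : σ | β < α} := by
        ext β; simp [le_iff_lt_or_eq, or_comm]
      rw [this]
      refine Set.Countable.insert _ ?_
      rw [← Set.countable_coe_iff]
      exact hseg α
    rw [hcompl, bk_mu_compl huniv' hadd' _, hcnt0 _ hc]
    norm_num
  -- for each α there is n, k with ν (A n α) > 1/(k+1)
  have hpos : ∀ α : σ, ∃ n k : ℕ, 1 / ((k : ℝ) + 1) < ν (A n α) := by
    intro α
    have h := hadd' (fun n => A n α) (hdisjn α)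
    rw [hun α, htail α] at h
    have hex : ∃ n, 0 < ν (A n α) := by
      by_contra hc
      push_neg at hc
      have : (fun n => ν (A n α)) = fun _ => (0:ℝ) :=
        funext fun n => le_antisymm (hc n) (hnn' _)
      rw [this] at h
      exact one_ne_zero (h.unique hasSum_zero)
    obtain ⟨n, hn⟩ := hex
    obtain ⟨k, hk⟩ := exists_nat_one_div_lt hn
    exact ⟨n, k, hk⟩
  choose nn kk hnk using hpos
  set H : σ → ℕ × ℕ := fun α => (nn α, kk α) with hH
  -- some fiber of H is infinite
  have hfiber : ∃ p : ℕ × ℕ, (H ⁻¹' {p}).Infinite := by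
    by_contra hc
    push_neg at hc
    have hcu : (Set.univ : Set σ).Countable := by
      have hun2 : (⋃ p : ℕ × ℕ, H ⁻¹' {p}) = Set.univ := by
        ext α; simp
      rw [← hun2]
      exact Set.countable_iUnion fun p => (hc p).countable
    have : Countable σ := Set.countable_univ_iff.1 hcu
    have h2 : Cardinal.mk σ ≤ Cardinal.aleph0 := Cardinal.mk_le_aleph0
    rw [hmk] at h2
    exact absurd h2 (not_le.2 Cardinal.aleph0_lt_aleph_one)
  obtain ⟨⟨n, k⟩, hinf⟩ := hfiber
  set g : ℕ ↪ (H ⁻¹' {(n, k)}) := hinf.natEmbedding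
  set E : ℕ → Set σ := fun m => A n ((g m : H ⁻¹' {(n, k)}) : σ) with hEdef
  have hEd : Pairwise (Function.onFun Disjoint E) := by
    intro i j hij
    refine hdisja n _ _ fun hc => hij (g.injective (Subtype.ext hc))
  have hbound : ∀ m : ℕ, 1 / ((k : ℝ) + 1) ≤ ν (E m) := by
    intro m
    have hm : H ((g m : H ⁻¹' {(n, k)}) : σ) = (n, k) := (g m).2
    have h1 : nn ((g m : H ⁻¹' {(n, k)}) : σ) = n := congrArg Prod.fst hm
    have h2 : kk ((g m : H ⁻¹' {(n, k)}) : σ) = k := congrArg Prod.snd hm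
    have := hnk ((g m : H ⁻¹' {(n, k)}) : σ)
    rw [h1, h2] at this
    exact le_of_lt this
  have hsum := hadd' E hEd
  have htend := hsum.summable.tendsto_atTop_zero
  have hle0 : 1 / ((k : ℝ) + 1) ≤ 0 :=
    ge_of_tendsto htend (Filter.Eventually.of_forall hbound)
  have : (0:ℝ) < 1 / ((k : ℝ) + 1) := by positivity
  linarith
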